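/- Fix T0 ∈ ℝ. Let q : ℝ → ℝ be antitone with q(t) > 0 for all t, let P : ℝ → ℝ be continuous with P(t) > 0 for all t and with P(T) < P(T0) for all T > T0, and let N : ℝ → ℝ be nondecreasing with N(T) ≥ 0 for all T. For T > T0 define s(T) := N(T) / ∫_{T0}^T P(t)·q(t) dt, the forward IRS rate I(T) := (P(T0) − P(T)) / ∫_{T0}^T P(t) dt, and the forward bond price F(T) := P(T)/P(T0). Then the function T ↦ (1 − F(T))·s(T)/I(T) is nondecreasing on (T0, ∞). -/

import Mathlib

open MeasureTheory

/-- No-arbitrage condition in terms of forward bond prices `F(T) = P(T)/P(T0)` and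
forward IRS rates `I(T) = (P(T0) − P(T))/∫_{T0}^T P`: the quantity
`(1 − F(T))·s(T)/I(T)` is nondecreasing in the maturity `T`. -/
theorem stmt_9
    (T0 : ℝ) (q P N : ℝ → ℝ)
    (hq : Antitone q) (hq0 : ∀ t, 0 < q t)
    (hP : Continuous P) (hP0 : ∀ t, 0 < P t)
    (hPT0 : ∀ T, T0 < T → P T < P T0)
    (hN : Monotone N) (hN0 : ∀ T, 0 ≤ N T)
    (s I F : ℝ → ℝ)
    (hs : ∀ T, T0 < T → s T = N T / ∫ t in T0..T, P t * q t)
    (hI : ∀ T, T0 < T → I T = (P T0 - P T) / ∫ t in T0..T, P t)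
    (hF : ∀ T, F T = P T / P T0) :
    MonotoneOn (fun T => (1 - F T) * s T / I T) (Set.Ioi T0) := by
  -- integrability
  have hPi : ∀ a b : ℝ, IntervalIntegrable P volume a b :=
    fun a b => hP.intervalIntegrable a b
  have hPqi : ∀ a b : ℝ, IntervalIntegrable (fun t => P t * q t) volume a b :=
    fun a b => (hq.intervalIntegrable.continuousOn_mul hP.continuousOn)
  -- positivity of integrals
  have hIP : ∀ T, T0 < T → 0 < ∫ t in T0..T, P t := fun T hT =>
    intervalIntegral.intervalIntegral_pos_of_pos_on (hPi T0 T)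
      (fun x _ => hP0 x) hT
  have hIPq : ∀ T, T0 < T → 0 < ∫ t in T0..T, P t * q t := fun T hT =>
    intervalIntegral.intervalIntegral_pos_of_pos_on (hPqi T0 T)
      (fun x _ => mul_pos (hP0 x) (hq0 x)) hT
  -- rewrite the function
  have hval : ∀ T, T0 < T →
      (1 - F T) * s T / I T
        = N T * (∫ t in T0..T, P t) / (P T0 * ∫ t in T0..T, P t * q t) := by
    intro T hT
    rw [hF T, hs T hT, hI T hT]
    have h1 : P T0 - P T ≠ 0 := sub_ne_zero.2 (ne_of_gt (hPT0 T hT))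
    have h2 : P T0 ≠ 0 := ne_of_gt (hP0 T0)
    have h3 : (∫ t in T0..T, P t) ≠ 0 := ne_of_gt (hIP T hT)
    have h4 : (∫ t in T0..T, P t * q t) ≠ 0 := ne_of_gt (hIPq T hT)
    field_simp
  intro a ha b hb hab
  simp only [Set.mem_Ioi] at ha hb
  simp only []
  rw [hval a ha, hval b hb]
  set IA := ∫ t in T0..a, P t with hIA
  set IB := ∫ t in T0..b, P t with hIB
  set JA := ∫ t in T0..a, P t * q t with hJA
  set JB := ∫ t in T0..b, P t * q t with hJB
  have hIApos : 0 < IA := hIP a ha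
  have hIBpos : 0 < IB := hIP b hb
  have hJApos : 0 < JA := hIPq a ha
  have hJBpos : 0 < JB := hIPq b hb
  -- key ratio inequality : IA / JA ≤ IB / JB i.e. IA * JB ≤ IB * JA
  have hsplitI : IA + (∫ t in a..b, P t) = IB :=
    intervalIntegral.integral_add_adjacent_intervals (hPi T0 a) (hPi a b)
  have hsplitJ : JA + (∫ t in a..b, P t * q t) = JB :=
    intervalIntegral.integral_add_adjacent_intervals (hPqi T0 a) (hPqi a b)
  have hIab : 0 ≤ ∫ t in a..b, P t :=
    intervalIntegral.integral_nonneg hab (fun x _ => (hP0 x).le)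
  -- JA ≥ q a * IA
  have h1 : IA * q a ≤ JA := by
    have := intervalIntegral.integral_mono_on (μ := volume) ha.le
      ((hPi T0 a).mul_const (q a)) (hPqi T0 a)
      (fun x hx => by
        have : q a ≤ q x := hq hx.2
        nlinarith [hP0 x])
    simpa [intervalIntegral.integral_mul_const] using this
  -- Jab ≤ q a * Iab
  have h2 : (∫ t in a..b, P t * q t) ≤ (∫ t in a..b, P t) * q a := by
    have := intervalIntegral.integral_mono_on (μ := volume) hab
      (hPqi a b) ((hPi a b).mul_const (q a))
      (fun x hx => by
        have : q x ≤ q a := hq hx.1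
        nlinarith [hP0 x])
    simpa [intervalIntegral.integral_mul_const] using this
  have key : IA * JB ≤ IB * JA := by nlinarith
  have hratio : IA / JA ≤ IB / JB := by
    rw [div_le_div_iff₀ hJApos hJBpos]; linarith [key]
  have hfinal : N a * IA / (P T0 * JA) ≤ N b * IB / (P T0 * JB) := by
    have hPT0pos := hP0 T0
    have hNa := hN0 a
    have hNab := hN hab
    rw [div_le_div_iff₀ (by positivity) (by positivity)]
    have e1 : 0 ≤ IA / JA := by positivity
    nlinarith [mul_le_mul hNab key (by positivity : (0:ℝ) ≤ IA * JB) (le_trans hNa hNab),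
      key, mul_nonneg hNa (mul_nonneg hIApos.le hJBpos.le)]
  exact hfinal
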